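/- Let (X,G) be a space of orderings and set M(G)=G∪{0} where 0 is a new element. Define: a·b=0 if a=0 or b=0 and a·b the group product otherwise; −a=(−1)·a; and a+b = {b} if a=0, {a} if b=0, M(G) if a=−b with a≠0, and D(a,b) otherwise, where D(a,b)={c∈G : for each x∈X, c(x)=a(x) or c(x)=b(x)}. Then (M(G),+,·,−,0,1) is a real reduced multifield. -/
import Mathlib


universe u v w

/-- The data of a multiring: a multivalued addition, a (single-valued) multiplication,
a negation map and constants `0`, `1`. -/
structure MultiringData (R : Type u) where
  add : R → R → Set R
  mul : R → R → R
  neg : R → R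
  zero : R
  one : R

/-- `(R,+,·,−,0,1)` is a multiring: `(R,+,−,0)` is a commutative multigroup,
`(R,·,1)` is a commutative monoid, `a·0 = 0`, and `c ∈ a+b → cd ∈ ad+bd`. -/
structure IsMultiring {R : Type u} (A : MultiringData R) : Prop where
  add_nonempty : ∀ a b, (A.add a b).Nonempty
  add_comm' : ∀ a b, A.add a b = A.add b a
  add_rev : ∀ {a b d}, d ∈ A.add a b → a ∈ A.add d (A.neg b) ∧ b ∈ A.add (A.neg a) d
  zero_add' : ∀ {x y}, y ∈ A.add A.zero x ↔ x = y
  add_assoc' : ∀ a b c, (⋃ t ∈ A.add a b, A.add t c) = ⋃ s ∈ A.add b c, A.add a s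
  mul_comm' : ∀ a b, A.mul a b = A.mul b a
  mul_assoc' : ∀ a b c, A.mul (A.mul a b) c = A.mul a (A.mul b c)
  one_mul' : ∀ a, A.mul A.one a = a
  mul_zero' : ∀ a, A.mul a A.zero = A.zero
  distrib : ∀ (d : R) {a b c : R}, c ∈ A.add a b → A.mul c d ∈ A.add (A.mul a d) (A.mul b d)

/-- A multifield is a multiring in which every nonzero element has a multiplicative
inverse (and `1 ≠ 0`). -/
structure IsMultifield {R : Type u} (A : MultiringData R) extends IsMultiring A : Prop where
  one_ne_zero' : A.one ≠ A.zero
  inv : ∀ a, a ≠ A.zero → ∃ b, A.mul a b = A.one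

/-- A real reduced multifield: a multifield with `a³ = a` and `a ∈ 1+1 → a = 1`. -/
def IsRealReducedMultifield {R : Type u} (A : MultiringData R) : Prop :=
  IsMultifield A ∧ (∀ a, A.mul (A.mul a a) a = a) ∧ ∀ a, a ∈ A.add A.one A.one → a = A.one

/-- A real reduced multiring: `1 ≠ 0`, `a³ = a`, `c ∈ a + ab² → c = a`, and
`c, d ∈ a² + b² → c = d`. -/
def IsRealReducedMultiring {R : Type u} (A : MultiringData R) : Prop :=
  IsMultiring A ∧ A.one ≠ A.zero ∧ (∀ a, A.mul (A.mul a a) a = a) ∧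
    (∀ a b c, c ∈ A.add a (A.mul a (A.mul b b)) → c = a) ∧
    (∀ a b c d, c ∈ A.add (A.mul a a) (A.mul b b) → d ∈ A.add (A.mul a a) (A.mul b b) → c = d)

/-- Morphisms of multirings. -/
structure IsMultiringHom {R : Type u} {S : Type v} (A : MultiringData R) (B : MultiringData S)
    (f : R → S) : Prop where
  map_add : ∀ {a b c}, c ∈ A.add a b → f c ∈ B.add (f a) (f b)
  map_neg : ∀ a, f (A.neg a) = B.neg (f a)
  map_zero : f A.zero = B.zero
  map_mul : ∀ a b, f (A.mul a b) = B.mul (f a) (f b)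
  map_one : f A.one = B.one

/-- Isomorphisms of multirings: bijective morphisms whose inverse is again a morphism. -/
def IsMultiringIso {R : Type u} {S : Type v} (A : MultiringData R) (B : MultiringData S)
    (f : R → S) : Prop :=
  IsMultiringHom A B f ∧ Function.Bijective f ∧
    ∀ a b c, f c ∈ B.add (f a) (f b) → c ∈ A.add a b
/-- `c ∈ D(a,b)` pointwise condition for value sets in a space of orderings:
for each `x`, `c(x) = a(x)` or `c(x) = b(x)`. -/
def AOSValue {X : Type u} (a b c : X → ℤˣ) : Prop := ∀ x, c x = a x ∨ c x = b x

/-- `(X, G)` is a space of orderings (abstract ordering space): `X` is nonempty, `G` is a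
subgroup of `{−1,1}^X` containing the constant `−1` and separating points, satisfying
axioms AX2 and AX3 for the value sets `D(a,b)`. -/
structure IsAOS {X : Type u} (G : Set (X → ℤˣ)) : Prop where
  nonempty : Nonempty X
  one_mem : (fun _ => (1 : ℤˣ)) ∈ G
  mul_mem : ∀ {a b : X → ℤˣ}, a ∈ G → b ∈ G → a * b ∈ G
  negone_mem : (fun _ => (-1 : ℤˣ)) ∈ G
  separates : ∀ x y : X, x ≠ y → ∃ a ∈ G, a x ≠ a y
  ax2 : ∀ χ : {a : X → ℤˣ // a ∈ G} → ℤˣ,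
    (∀ a b : {a : X → ℤˣ // a ∈ G}, χ ⟨a.1 * b.1, mul_mem a.2 b.2⟩ = χ a * χ b) →
    χ ⟨fun _ => (-1 : ℤˣ), negone_mem⟩ = -1 →
    (∀ a b c : {a : X → ℤˣ // a ∈ G}, χ a = 1 → χ b = 1 → AOSValue a.1 b.1 c.1 → χ c = 1) →
    ∃ x : X, ∀ a : {a : X → ℤˣ // a ∈ G}, χ a = a.1 x
  ax3 : ∀ a b c r t : {a : X → ℤˣ // a ∈ G}, AOSValue a.1 r.1 t.1 → AOSValue b.1 c.1 r.1 →
    ∃ s : {a : X → ℤˣ // a ∈ G}, AOSValue a.1 b.1 s.1 ∧ AOSValue s.1 c.1 t.1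

/-- The multiring data `M(G) = G ∪ {0}` associated to a space of orderings `(X,G)`:
`a·b` is the group product extended by `0`, `−a = (−1)·a`, and
`a + b = {b}` if `a = 0`, `{a}` if `b = 0`, `M(G)` if `a = −b ≠ 0`, `D(a,b)` otherwise. -/
def MofAOS {X : Type u} {G : Set (X → ℤˣ)} (h : IsAOS G) :
    MultiringData (Option {a : X → ℤˣ // a ∈ G}) where
  add a b :=
    {c | (a = none ∧ c = b) ∨ (b = none ∧ c = a) ∨
      (∃ g k : {a : X → ℤˣ // a ∈ G}, a = some g ∧ b = some k ∧ g.1 = -k.1) ∨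
      (∃ g k m : {a : X → ℤˣ // a ∈ G}, a = some g ∧ b = some k ∧ g.1 ≠ -k.1 ∧
        c = some m ∧ AOSValue g.1 k.1 m.1)}
  mul a b :=
    match a, b with
    | some g, some k => some ⟨g.1 * k.1, h.mul_mem g.2 k.2⟩
    | _, _ => none
  neg a := a.map fun g => ⟨(fun _ => (-1 : ℤˣ)) * g.1, h.mul_mem h.negone_mem g.2⟩
  zero := none
  one := some ⟨fun _ => (1 : ℤˣ), h.one_mem⟩

section AuxAOS

variable {X : Type u} {G : Set (X → ℤˣ)} (h : IsAOS G)

private lemma ucases (u v : ℤˣ) : u = v ∨ u = -v := by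
  rcases Int.units_eq_one_or u with h1 | h1 <;> rcases Int.units_eq_one_or v with h2 | h2 <;>
    simp [h1, h2]

private lemma negone_mul_eq (g : X → ℤˣ) : (fun _ => (-1 : ℤˣ)) * g = -g := by
  funext x
  simp [Pi.mul_apply]

private lemma aux_neg_mem (h : IsAOS G) {g : X → ℤˣ} (hg : g ∈ G) : -g ∈ G := by
  have := h.mul_mem h.negone_mem hg
  rwa [negone_mul_eq] at this

private lemma mem_add_iff (a b c : Option {a : X → ℤˣ // a ∈ G}) :
    c ∈ (MofAOS h).add a b ↔ ((a = none ∧ c = b) ∨ (b = none ∧ c = a) ∨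
      (∃ g k : {a : X → ℤˣ // a ∈ G}, a = some g ∧ b = some k ∧ g.1 = -k.1) ∨
      (∃ g k m : {a : X → ℤˣ // a ∈ G}, a = some g ∧ b = some k ∧ g.1 ≠ -k.1 ∧
        c = some m ∧ AOSValue g.1 k.1 m.1)) := Iff.rfl

private lemma mem_add_none_left (b c : Option {a : X → ℤˣ // a ∈ G}) :
    c ∈ (MofAOS h).add none b ↔ c = b := by
  rw [mem_add_iff]
  constructor
  · rintro (⟨-, rfl⟩ | ⟨rfl, rfl⟩ | ⟨g, k, hg, -⟩ | ⟨g, k, m, hg, -⟩) <;> first | rfl | cases hg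
  · intro hc; exact Or.inl ⟨rfl, hc⟩

private lemma mem_add_none_right (a c : Option {a : X → ℤˣ // a ∈ G}) :
    c ∈ (MofAOS h).add a none ↔ c = a := by
  rw [mem_add_iff]
  constructor
  · rintro (⟨rfl, rfl⟩ | ⟨-, rfl⟩ | ⟨g, k, -, hk, -⟩ | ⟨g, k, m, -, hk, -⟩) <;>
      first | rfl | cases hk
  · intro hc; exact Or.inr (Or.inl ⟨rfl, hc⟩)

private lemma mem_add_some_some (g k : {a : X → ℤˣ // a ∈ G})
    (c : Option {a : X → ℤˣ // a ∈ G}) :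
    c ∈ (MofAOS h).add (some g) (some k) ↔
      g.1 = -k.1 ∨ ∃ m, c = some m ∧ AOSValue g.1 k.1 m.1 := by
  rw [mem_add_iff]
  constructor
  · rintro (⟨hg, -⟩ | ⟨hg, -⟩ | ⟨g', k', hg, hk, he⟩ | ⟨g', k', m, hg, hk, hne, hc, hv⟩)
    · cases hg
    · cases hg
    · cases Option.some.inj hg; cases Option.some.inj hk; exact Or.inl he
    · cases Option.some.inj hg; cases Option.some.inj hk; exact Or.inr ⟨m, hc, hv⟩
  · rintro (he | ⟨m, hc, hv⟩)
    · exact Or.inr (Or.inr (Or.inl ⟨g, k, rfl, rfl, he⟩))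
    · by_cases he : g.1 = -k.1
      · exact Or.inr (Or.inr (Or.inl ⟨g, k, rfl, rfl, he⟩))
      · exact Or.inr (Or.inr (Or.inr ⟨g, k, m, rfl, rfl, he, hc, hv⟩))

/-- When `g = -k`, the sum is everything. -/
private lemma mem_add_of_neg {g k : {a : X → ℤˣ // a ∈ G}} (he : g.1 = -k.1)
    (c : Option {a : X → ℤˣ // a ∈ G}) : c ∈ (MofAOS h).add (some g) (some k) :=
  (mem_add_some_some h g k c).2 (Or.inl he)

private lemma self_mem_add_right (a : Option {a : X → ℤˣ // a ∈ G})
    (B : {a : X → ℤˣ // a ∈ G}) : some B ∈ (MofAOS h).add a (some B) := by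
  cases a with
  | none => exact (mem_add_none_left h _ _).2 rfl
  | some A =>
    by_cases he : A.1 = -B.1
    · exact mem_add_of_neg h he _
    · exact (mem_add_some_some h A B _).2 (Or.inr ⟨B, rfl, fun x => Or.inr rfl⟩)

private lemma self_mem_add_left (a : Option {a : X → ℤˣ // a ∈ G})
    (B : {a : X → ℤˣ // a ∈ G}) : some B ∈ (MofAOS h).add (some B) a := by
  cases a with
  | none => exact (mem_add_none_right h _ _).2 rfl
  | some A =>
    by_cases he : B.1 = -A.1
    · exact mem_add_of_neg h he _
    · exact (mem_add_some_some h B A _).2 (Or.inr ⟨B, rfl, fun x => Or.inl rfl⟩)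

private lemma neg_some (g : {a : X → ℤˣ // a ∈ G}) :
    (MofAOS h).neg (some g) = some ⟨-g.1, aux_neg_mem h g.2⟩ :=
  congrArg some (Subtype.ext (negone_mul_eq g.1))

private lemma aosvalue_symm {A B M : X → ℤˣ} (hv : AOSValue A B M) : AOSValue B A M :=
  fun x => (hv x).symm

/-- `M ∈ D(A,B)` implies `A ∈ D(M,-B)`. -/
private lemma aos_shift1 {A B M : X → ℤˣ} (hv : AOSValue A B M) : AOSValue M (-B) A := by
  intro x
  rcases hv x with h1 | h1
  · exact Or.inl h1.symm
  · rcases ucases (A x) (B x) with h2 | h2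
    · exact Or.inl (by rw [h2, ← h1])
    · exact Or.inr (by rw [Pi.neg_apply]; exact h2)

/-- `M ∈ D(A,B)` implies `B ∈ D(-A,M)`. -/
private lemma aos_shift2 {A B M : X → ℤˣ} (hv : AOSValue A B M) : AOSValue (-A) M B := by
  intro x
  rcases hv x with h1 | h1
  · rcases ucases (B x) (A x) with h2 | h2
    · exact Or.inr (by rw [h2, ← h1])
    · exact Or.inl (by rw [Pi.neg_apply]; exact h2)
  · exact Or.inr h1.symm

/-- `-C ∈ D(A,B)` implies `-A ∈ D(B,C)`. -/
private lemma aos_shift3 {A B C : X → ℤˣ} (hv : AOSValue A B (-C)) : AOSValue B C (-A) := by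
  intro x
  rcases hv x with h1 | h1
  · rw [Pi.neg_apply] at h1
    exact Or.inr (by rw [Pi.neg_apply, ← h1, neg_neg])
  · rw [Pi.neg_apply] at h1
    rcases ucases (A x) (C x) with h2 | h2
    · exact Or.inl (by rw [Pi.neg_apply, h2, h1])
    · exact Or.inr (by rw [Pi.neg_apply, h2, neg_neg])

private lemma mul_none (a : Option {a : X → ℤˣ // a ∈ G}) : (MofAOS h).mul a none = none := by
  cases a <;> rfl

private lemma none_mul (a : Option {a : X → ℤˣ // a ∈ G}) : (MofAOS h).mul none a = none := by
  cases a <;> rfl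

private lemma aux_add_comm (a b : Option {a : X → ℤˣ // a ∈ G}) :
    (MofAOS h).add a b = (MofAOS h).add b a := by
  ext c
  cases a with
  | none =>
    cases b with
    | none => rfl
    | some k => rw [mem_add_none_left, mem_add_none_right]
  | some g =>
    cases b with
    | none => rw [mem_add_none_left, mem_add_none_right]
    | some k =>
      rw [mem_add_some_some, mem_add_some_some]
      constructor
      · rintro (he | ⟨m, hc, hv⟩)
        · exact Or.inl (by rw [he, neg_neg])
        · exact Or.inr ⟨m, hc, aosvalue_symm hv⟩
      · rintro (he | ⟨m, hc, hv⟩)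
        · exact Or.inl (by rw [he, neg_neg])
        · exact Or.inr ⟨m, hc, aosvalue_symm hv⟩

/-- One inclusion of associativity. -/
private lemma aux_assoc_sub (a b c : Option {a : X → ℤˣ // a ∈ G}) :
    (⋃ t ∈ (MofAOS h).add a b, (MofAOS h).add t c) ⊆
      ⋃ s ∈ (MofAOS h).add b c, (MofAOS h).add a s := by
  intro u hu
  rw [Set.mem_iUnion₂] at hu ⊢
  obtain ⟨t, htab, hutc⟩ := hu
  cases a with
  | none =>
    rw [mem_add_none_left] at htab
    subst htab
    exact ⟨u, hutc, (mem_add_none_left h _ _).2 rfl⟩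
  | some A =>
  cases b with
  | none =>
    rw [mem_add_none_right] at htab
    subst htab
    exact ⟨c, (mem_add_none_left h _ _).2 rfl, hutc⟩
  | some B =>
  cases c with
  | none =>
    rw [mem_add_none_right] at hutc
    subst hutc
    exact ⟨some B, (mem_add_none_right h _ _).2 rfl, htab⟩
  | some C =>
  rw [mem_add_some_some] at htab
  rcases htab with hAB | ⟨T, rfl, hvT⟩
  · -- a = -b : pick s = b
    refine ⟨some B, self_mem_add_left h _ B, mem_add_of_neg h hAB u⟩
  · -- t = some T with T ∈ D(A,B)
    rw [mem_add_some_some] at hutc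
    rcases hutc with hTC | ⟨U, rfl, hvU⟩
    · -- T = -C : take s = -A
      have hvC : AOSValue A.1 B.1 (-C.1) := by rwa [hTC] at hvT
      have hvA : AOSValue B.1 C.1 (-A.1) := aos_shift3 hvC
      refine ⟨some ⟨-A.1, aux_neg_mem h A.2⟩, ?_, ?_⟩
      · exact (mem_add_some_some h B C _).2 (Or.inr ⟨_, rfl, hvA⟩)
      · exact mem_add_of_neg h (by rw [neg_neg]) u
    · -- u = some U with U ∈ D(T,C) : use AX3
      obtain ⟨S, hS1, hS2⟩ := h.ax3 C B A T U (aosvalue_symm hvU) (aosvalue_symm hvT)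
      refine ⟨some S, ?_, ?_⟩
      · exact (mem_add_some_some h B C _).2 (Or.inr ⟨S, rfl, aosvalue_symm hS1⟩)
      · exact (mem_add_some_some h A S _).2 (Or.inr ⟨U, rfl, aosvalue_symm hS2⟩)

end AuxAOS

/-- For a space of orderings `(X,G)`, the structure `M(G) = G ∪ {0}` is a real reduced
multifield. -/
theorem aos_to_real_reduced_multifield {X : Type u} (G : Set (X → ℤˣ)) (h : IsAOS G) :
    IsRealReducedMultifield (MofAOS h) := by
  classical
  obtain ⟨x0⟩ := h.nonempty
  refine ⟨⟨⟨?_, aux_add_comm h, ?_, ?_, ?_, ?_, ?_, ?_, ?_, ?_⟩, ?_, ?_⟩, ?_, ?_⟩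
  · -- add_nonempty
    intro a b
    cases a with
    | none => exact ⟨b, (mem_add_none_left h _ _).2 rfl⟩
    | some A =>
      cases b with
      | none => exact ⟨some A, (mem_add_none_right h _ _).2 rfl⟩
      | some B => exact ⟨some A, self_mem_add_left h _ A⟩
  · -- add_rev
    intro a b d hd
    rw [mem_add_iff] at hd
    rcases hd with ⟨rfl, rfl⟩ | ⟨rfl, rfl⟩ | ⟨A, B, rfl, rfl, he⟩ | ⟨A, B, M, rfl, rfl, hne, rfl, hv⟩
    · -- a = 0, d = b
      constructor
      · cases d with
        | none => exact (mem_add_none_left h _ _).2 rfl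
        | some B =>
          rw [neg_some]
          exact mem_add_of_neg h (by simp) none
      · exact (mem_add_none_left h _ _).2 rfl
    · -- b = 0, d = a
      constructor
      · exact (mem_add_none_right h _ _).2 rfl
      · cases d with
        | none => exact (mem_add_none_left h _ _).2 rfl
        | some A =>
          rw [neg_some]
          exact mem_add_of_neg h (by simp) none
    · -- a = -b, d arbitrary
      constructor
      · rw [neg_some]
        have : some A = some (⟨-B.1, aux_neg_mem h B.2⟩ : {a : X → ℤˣ // a ∈ G}) :=
          congrArg some (Subtype.ext he)
        rw [this]
        exact self_mem_add_right h d _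
      · rw [neg_some]
        have : some B = some (⟨-A.1, aux_neg_mem h A.2⟩ : {a : X → ℤˣ // a ∈ G}) :=
          congrArg some (Subtype.ext (show B.1 = -A.1 by rw [he, neg_neg]))
        rw [this]
        exact self_mem_add_left h d _
    · -- d = some M, M ∈ D(A,B)
      constructor
      · rw [neg_some]
        exact (mem_add_some_some h M _ _).2 (Or.inr ⟨A, rfl, aos_shift1 hv⟩)
      · rw [neg_some]
        exact (mem_add_some_some h _ M _).2 (Or.inr ⟨B, rfl, aos_shift2 hv⟩)
  · -- zero_add'
    intro x y
    rw [show (MofAOS h).zero = none from rfl, mem_add_none_left, eq_comm]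
  · -- add_assoc'
    intro a b c
    refine subset_antisymm (aux_assoc_sub h a b c) ?_
    intro u hu
    have hu' : u ∈ ⋃ t ∈ (MofAOS h).add c b, (MofAOS h).add t a := by
      rw [Set.mem_iUnion₂] at hu ⊢
      obtain ⟨s, hs, hus⟩ := hu
      exact ⟨s, (aux_add_comm h c b) ▸ hs, (aux_add_comm h s a) ▸ hus⟩
    have := aux_assoc_sub h c b a hu'
    rw [Set.mem_iUnion₂] at this ⊢
    obtain ⟨t, ht, hut⟩ := this
    exact ⟨t, (aux_add_comm h a b) ▸ ht, (aux_add_comm h t c) ▸ hut⟩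
  · -- mul_comm'
    intro a b
    cases a <;> cases b <;> try rfl
    exact congrArg some (Subtype.ext (mul_comm _ _))
  · -- mul_assoc'
    intro a b c
    cases a <;> cases b <;> cases c <;> try rfl
    exact congrArg some (Subtype.ext (mul_assoc _ _ _))
  · -- one_mul'
    intro a
    cases a with
    | none => rfl
    | some g => exact congrArg some (Subtype.ext (one_mul g.1))
  · -- mul_zero'
    intro a
    exact mul_none h a
  · -- distrib
    intro d a b c hc
    cases d with
    | none =>
      rw [mul_none, mul_none, mul_none]
      exact (mem_add_none_left h _ _).2 rfl
    | some D =>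
      rw [mem_add_iff] at hc
      rcases hc with ⟨rfl, rfl⟩ | ⟨rfl, rfl⟩ | ⟨A, B, rfl, rfl, he⟩ |
        ⟨A, B, M, rfl, rfl, hne, rfl, hv⟩
      · rw [none_mul]
        exact (mem_add_none_left h _ _).2 rfl
      · rw [none_mul]
        exact (mem_add_none_right h _ _).2 rfl
      · refine mem_add_of_neg h (show A.1 * D.1 = -(B.1 * D.1) from ?_) _
        funext x
        rw [Pi.mul_apply, Pi.neg_apply, Pi.mul_apply, congrFun he x, Pi.neg_apply, neg_mul]
      · have hv' : AOSValue (A.1 * D.1) (B.1 * D.1) (M.1 * D.1) := by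
          intro x
          rcases hv x with h1 | h1
          · exact Or.inl (by rw [Pi.mul_apply, Pi.mul_apply, h1])
          · exact Or.inr (by rw [Pi.mul_apply, Pi.mul_apply, h1])
        exact (mem_add_some_some h _ _ _).2 (Or.inr ⟨_, rfl, hv'⟩)
  · -- one_ne_zero
    exact Option.some_ne_none _
  · -- inv
    intro a ha
    cases a with
    | none => exact absurd rfl ha
    | some g =>
      refine ⟨some g, congrArg some (Subtype.ext (funext fun x => ?_))⟩
      exact Int.units_mul_self (g.1 x)
  · -- cube
    intro a
    cases a with
    | none => rfl
    | some g =>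
      refine congrArg some (Subtype.ext (funext fun x => ?_))
      show g.1 x * g.1 x * g.1 x = g.1 x
      rw [Int.units_mul_self, one_mul]
  · -- 1 + 1
    intro a ha
    rw [show (MofAOS h).one = some ⟨fun _ => (1:ℤˣ), h.one_mem⟩ from rfl,
      mem_add_some_some] at ha
    rcases ha with he | ⟨m, rfl, hv⟩
    · have h1 : (1 : ℤˣ) = -1 := congrFun he x0
      exact absurd h1 (by decide)
    · refine congrArg some (Subtype.ext (funext fun x => ?_))
      rcases hv x with h1 | h1 <;> exact h1
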